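/- Let Γ be a finite abelian group and b : Γ × Γ → ℂˣ a bilinear map (a homomorphism in each variable) that is alternating (b(x,x) = 1 for all x) and nondegenerate (if b(x,y) = 1 for all y then x = 1). Then |Γ| is a perfect square. -/
import Mathlib

universe u

private theorem sq_aux : ∀ (N : ℕ) (Γ : Type u) [CommGroup Γ] [Finite Γ]
    (b : Γ → Γ → ℂˣ),
    (∀ x y z : Γ, b (x * y) z = b x z * b y z) →
    (∀ x y z : Γ, b x (y * z) = b x y * b x z) →
    (∀ x : Γ, b x x = 1) →
    (∀ x : Γ, (∀ y : Γ, b x y = 1) → x = 1) →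
    Nat.card Γ = N → IsSquare N := by
  intro N
  induction N using Nat.strong_induction_on with
  | _ N IH =>
    intro Γ _ _ b hbil₁ hbil₂ halt hnd hcard
    -- basic hom facts
    have keyL : ∀ (w g : Γ) (k : ℤ), b w (g ^ k) = (b w g) ^ k := fun w g k =>
      map_zpow (MonoidHom.mk' (b w) (hbil₂ w)) g k
    have keyLn : ∀ (w g : Γ) (k : ℕ), b w (g ^ k) = (b w g) ^ k := fun w g k =>
      map_pow (MonoidHom.mk' (b w) (hbil₂ w)) g k
    have keyR : ∀ (w g : Γ) (k : ℤ), b (w ^ k) g = (b w g) ^ k := fun w g k =>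
      map_zpow (MonoidHom.mk' (fun t => b t g) fun a c => hbil₁ a c g) w k
    have keyRn : ∀ (w g : Γ) (k : ℕ), b (w ^ k) g = (b w g) ^ k := fun w g k =>
      map_pow (MonoidHom.mk' (fun t => b t g) fun a c => hbil₁ a c g) w k
    have honeL : ∀ w : Γ, b w 1 = 1 := fun w =>
      map_one (MonoidHom.mk' (b w) (hbil₂ w))
    have honeR : ∀ g : Γ, b 1 g = 1 := fun g =>
      map_one (MonoidHom.mk' (fun t => b t g) fun a c => hbil₁ a c g)
    have hinvR : ∀ (w g : Γ), b w⁻¹ g = (b w g)⁻¹ := fun w g =>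
      map_inv (MonoidHom.mk' (fun t => b t g) fun a c => hbil₁ a c g) w
    have hskew : ∀ x y : Γ, b y x = (b x y)⁻¹ := by
      intro x y
      have h : b x x * b y x * (b x y * b y y) = 1 := by
        rw [← hbil₁, ← hbil₁, ← hbil₂]; exact halt (x * y)
      rw [halt, halt, one_mul, mul_one] at h
      exact eq_inv_of_mul_eq_one_left h
    by_cases hΓ : ∀ g : Γ, g = 1
    · have hsub : Subsingleton Γ := ⟨fun a c => (hΓ a).trans (hΓ c).symm⟩
      have h1 : N = 1 := by
        rw [← hcard, Nat.card_eq_one_iff_unique]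
        exact ⟨hsub, ⟨1⟩⟩
      exact h1 ▸ ⟨1, rfl⟩
    · push_neg at hΓ
      obtain ⟨g₁, hg₁⟩ := hΓ
      have : Nontrivial Γ := ⟨⟨g₁, 1, hg₁⟩⟩
      set n := Monoid.exponent Γ with hn
      have hn1 : 1 < n := Monoid.one_lt_exponent
      have hexp1 : ∀ g : Γ, g ^ n = 1 := fun g => Monoid.pow_exponent_eq_one g
      obtain ⟨x, hx⟩ :=
        Monoid.exists_orderOf_eq_exponent (G := Γ) Monoid.ExponentExists.of_finite
      set χ : Γ →* ℂˣ := MonoidHom.mk' (b x) (hbil₂ x) with hχ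
      have hχord : orderOf χ = n := by
        have hiff : ∀ k : ℕ, χ ^ k = 1 ↔ x ^ k = 1 := by
          intro k
          constructor
          · intro h
            apply hnd
            intro y
            have h2 : (χ ^ k) y = 1 := by rw [h]; rfl
            rw [MonoidHom.pow_apply] at h2
            rw [keyRn x y k]
            exact h2
          · intro h
            apply MonoidHom.ext
            intro y
            rw [MonoidHom.pow_apply, MonoidHom.one_apply]
            show (b x y) ^ k = 1
            rw [← keyRn x y k, h, honeR]
        exact (orderOf_eq_orderOf_iff.mpr hiff).trans hx
      haveI : Finite χ.range := Set.Finite.to_subtype (Set.finite_range χ)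
      have hexpR : Monoid.exponent χ.range = n := by
        apply Nat.dvd_antisymm
        · rw [Monoid.exponent_dvd_iff_forall_pow_eq_one]
          rintro ⟨u, y, rfl⟩
          apply Subtype.ext
          simp only [SubmonoidClass.coe_pow, OneMemClass.coe_one]
          show (b x y) ^ n = 1
          rw [← keyLn x y n, hexp1 y, honeL]
        · rw [← hχord]
          apply orderOf_dvd_of_pow_eq_one
          apply MonoidHom.ext
          intro y
          rw [MonoidHom.pow_apply, MonoidHom.one_apply]
          have hm : χ y ∈ χ.range := ⟨y, rfl⟩
          have h4 := Monoid.pow_exponent_eq_one (⟨χ y, hm⟩ : χ.range)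
          have h5 := congrArg (Subtype.val) h4
          simp only [SubmonoidClass.coe_pow, OneMemClass.coe_one] at h5
          exact h5
      obtain ⟨u, hu⟩ :=
        Monoid.exists_orderOf_eq_exponent (G := χ.range) Monoid.ExponentExists.of_finite
      obtain ⟨y, hy⟩ := u.2
      have hζ : orderOf (b x y) = n := by
        have : orderOf ((u : ℂˣ)) = n := by
          rw [Subgroup.orderOf_coe, hu, hexpR]
        rwa [← hy] at this
      set ζ := b x y with hζdef
      haveI : NeZero n := ⟨by omega⟩
      have hprim : IsPrimitiveRoot ζ n := hζ ▸ IsPrimitiveRoot.orderOf ζ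
      have hzeq : Subgroup.zpowers ζ = rootsOfUnity n ℂ := hprim.zpowers_eq
      set Φ : Γ →* ℂˣ × ℂˣ :=
        MonoidHom.mk' (fun g => (b g x, b g y))
          (fun a c => Prod.ext (hbil₁ a c x) (hbil₁ a c y)) with hΦ
      have hΦapp : ∀ g : Γ, Φ g = (b g x, b g y) := fun g => rfl
      have hbyx : b y x = ζ⁻¹ := hskew x y
      have hit : ∀ i j : ℤ, Φ (y ^ (-i) * x ^ j) = (ζ ^ i, ζ ^ j) := by
        intro i j
        rw [hΦapp]
        have h1 : b (y ^ (-i) * x ^ j) x = ζ ^ i := by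
          rw [hbil₁, keyR, keyR, halt, one_zpow, mul_one, hbyx, inv_zpow, zpow_neg,
            inv_inv]
        have h2 : b (y ^ (-i) * x ^ j) y = ζ ^ j := by
          rw [hbil₁, keyR, keyR, halt, one_zpow, one_mul]
        rw [h1, h2]
      have hΦrange : Φ.range = (Subgroup.zpowers ζ).prod (Subgroup.zpowers ζ) := by
        apply le_antisymm
        · rintro p ⟨g, rfl⟩
          rw [hΦapp, Subgroup.mem_prod]
          constructor
          · show b g x ∈ Subgroup.zpowers ζ
            rw [hzeq, mem_rootsOfUnity]
            rw [← keyRn g x n, hexp1 g, honeR]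
          · show b g y ∈ Subgroup.zpowers ζ
            rw [hzeq, mem_rootsOfUnity]
            rw [← keyRn g y n, hexp1 g, honeR]
        · rintro ⟨p, q⟩ hpq
          rw [Subgroup.mem_prod] at hpq
          obtain ⟨⟨i, hi⟩, ⟨j, hj⟩⟩ := hpq
          replace hi : ζ ^ i = p := hi
          replace hj : ζ ^ j = q := hj
          exact ⟨y ^ (-i) * x ^ j, (hit i j).trans (by rw [hi, hj])⟩
      set K := Φ.ker with hK
      have hcardΓ : Nat.card Γ = (n * n) * Nat.card K := by
        rw [Subgroup.card_eq_card_quotient_mul_card_subgroup K]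
        congr 1
        rw [Nat.card_congr (QuotientGroup.quotientKerEquivRange Φ).toEquiv]
        rw [hΦrange, Nat.card_congr (Subgroup.prodEquiv _ _).toEquiv, Nat.card_prod,
          Nat.card_zpowers, hζ]
      have hKmem : ∀ z : Γ, z ∈ K ↔ b z x = 1 ∧ b z y = 1 := by
        intro z
        rw [MonoidHom.mem_ker, hΦapp, Prod.ext_iff]
        rfl
      -- induction step
      have hKlt : Nat.card K < N := by
        have hpos : 0 < Nat.card K := Nat.card_pos
        rw [← hcard, hcardΓ]
        have h9 : 1 < n * n := by nlinarith
        calc Nat.card K = 1 * Nat.card K := (one_mul _).symm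
          _ < (n * n) * Nat.card K := Nat.mul_lt_mul_of_pos_right h9 hpos
      have hsqK : IsSquare (Nat.card K) := by
        apply IH (Nat.card K) hKlt K (fun z w => b z w)
        · intro a c d
          show b ((a : Γ) * c) d = _
          rw [hbil₁]
        · intro a c d
          show b (a : Γ) ((c : Γ) * d) = _
          rw [hbil₂]
        · intro a; exact halt a
        · intro z hz
          have hz1 : (z : Γ) = 1 := by
            apply hnd
            intro g
            have hg : Φ g ∈ Φ.range := ⟨g, rfl⟩
            rw [hΦrange, Subgroup.mem_prod] at hg
            obtain ⟨⟨i, hi⟩, ⟨j, hj⟩⟩ := hg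
            replace hi : ζ ^ i = (Φ g).1 := hi
            replace hj : ζ ^ j = (Φ g).2 := hj
            set g₀ := y ^ (-i) * x ^ j with hg₀
            have hΦg₀ : Φ g₀ = Φ g := by
              rw [hit i j, hi, hj]
            have hker : g * g₀⁻¹ ∈ K := by
              rw [hK, MonoidHom.mem_ker, map_mul, map_inv, hΦg₀, mul_inv_cancel]
            have h1 : b (z : Γ) (g * g₀⁻¹) = 1 := hz ⟨g * g₀⁻¹, hker⟩
            have hzx : b (z : Γ) x = 1 ∧ b (z : Γ) y = 1 := (hKmem z).mp z.2
            have h2 : b (z : Γ) g₀ = 1 := by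
              rw [hg₀, hbil₂, keyL, keyL, hzx.1, hzx.2, one_zpow, one_zpow, one_mul]
            have h3 : b (z : Γ) ((g * g₀⁻¹) * g₀) = 1 := by
              rw [hbil₂, h1, h2, one_mul]
            rwa [inv_mul_cancel_right] at h3
          exact Subtype.ext hz1
        · rfl
      obtain ⟨d, hd⟩ := hsqK
      refine ⟨n * d, ?_⟩
      rw [← hcard, hcardΓ, hd]
      ring

theorem stmt_3 (Γ : Type*) [CommGroup Γ] [Fintype Γ] (b : Γ → Γ → ℂˣ)
    (hbil₁ : ∀ x y z : Γ, b (x * y) z = b x z * b y z)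
    (hbil₂ : ∀ x y z : Γ, b x (y * z) = b x y * b x z)
    (halt : ∀ x : Γ, b x x = 1)
    (hnd : ∀ x : Γ, (∀ y : Γ, b x y = 1) → x = 1) :
    IsSquare (Fintype.card Γ) := by
  exact sq_aux (Fintype.card Γ) Γ b hbil₁ hbil₂ halt hnd Nat.card_eq_fintype_card
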